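/- arXiv:1101.4224 — 2 statements merged into one kernel-verified Lean document; each statement's English description precedes it below -/
import Mathlib

section
/- Let F be an exponential field with infinite cyclic kernel in which 2 has a logarithm, i.e., there exists t ∈ F with E(t)=2. Then for x ∈ F: x ∈ ℤ if and only if x ∈ ℚ and there exists t ∈ F with E(t)=2 and E(x·t) ∈ ℚ. -/
/-- Key rational fact: if `r ^ n = 2 ^ m` with `m, n` coprime and `n > 0`, then `n = 1`. -/
lemma aux_rat_pow_eq_two_zpow {r : ℚ} {m : ℤ} {n : ℕ} (hn : 0 < n)
    (hcop : Nat.Coprime m.natAbs n) (h : r ^ n = (2 : ℚ) ^ m) : n = 1 := by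
  have h2 : (2 : ℚ) ≠ 0 := by norm_num
  have hr : r ≠ 0 := by
    intro h0
    rw [h0, zero_pow hn.ne'] at h
    exact (zpow_ne_zero m h2) h.symm
  have : Fact (Nat.Prime 2) := ⟨Nat.prime_two⟩
  have hself : padicValRat 2 (2 : ℚ) = 1 := by
    have := padicValRat.self (p := 2) (by norm_num)
    norm_num at this
    exact this
  have hv2 : padicValRat 2 ((2 : ℚ) ^ m) = m := by
    rcases m with k | k
    · simpa [hself] using (padicValRat.pow (p := 2) h2 (k := k))
    · rw [zpow_negSucc, padicValRat.inv, padicValRat.pow (p := 2) (2 : ℚ), hself]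
      simp [Int.negSucc_eq]
  have hval : (n : ℤ) * padicValRat 2 r = m := by
    rw [← hv2, ← h, padicValRat.pow r]
  have hdvd : (n : ℤ) ∣ m := ⟨_, hval.symm⟩
  have hdvd' : n ∣ m.natAbs := by
    have := Int.natAbs_dvd_natAbs.mpr hdvd
    simpa using this
  exact Nat.eq_one_of_dvd_coprimes hcop hdvd' (dvd_refl n)

/-- In an exponential field with infinite cyclic kernel in which 2 has a
logarithm, `x ∈ ℤ` iff `x ∈ ℚ` and there is `t` with `E t = 2` and `E (x t) ∈ ℚ`
(Laczkovich's definition of ℤ). -/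
theorem laczkovich_def_of_int
    (F : Type*) [Field F] [CharZero F] (E : F → F)
    (hE0 : E 0 = 1) (hEadd : ∀ x y : F, E (x + y) = E x * E y)
    (τ : F) (hτ : τ ≠ 0)
    (hker : ∀ x : F, E x = 1 ↔ ∃ m : ℤ, x = (m : F) * τ)
    (hlog2 : ∃ t : F, E t = 2) :
    ∀ x : F, (∃ m : ℤ, x = (m : F)) ↔
      ((∃ q : ℚ, x = (q : F)) ∧ ∃ t : F, E t = 2 ∧ ∃ q : ℚ, E (x * t) = (q : F)) := by
  -- E is never zero
  have hEne : ∀ y : F, E y ≠ 0 := by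
    intro y h0
    have := hEadd y (-y)
    rw [h0, zero_mul, add_neg_cancel, hE0] at this
    exact one_ne_zero this
  have hEneg : ∀ y : F, E (-y) = (E y)⁻¹ := by
    intro y
    have := hEadd y (-y)
    rw [add_neg_cancel, hE0] at this
    exact eq_inv_of_mul_eq_one_right this.symm
  have hEnat : ∀ (k : ℕ) (y : F), E ((k : F) * y) = E y ^ k := by
    intro k y
    induction k with
    | zero => simpa using hE0
    | succ n ih =>
      have : ((n + 1 : ℕ) : F) * y = (n : F) * y + y := by push_cast; ring
      rw [this, hEadd, ih, pow_succ]
  have hEint : ∀ (m : ℤ) (y : F), E ((m : F) * y) = E y ^ m := by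
    intro m y
    rcases m with k | k
    · simpa using hEnat k y
    · have : ((Int.negSucc k : ℤ) : F) * y = -(((k + 1 : ℕ) : F) * y) := by
        push_cast [Int.negSucc_eq]; ring
      rw [this, hEneg, hEnat, zpow_negSucc]
  intro x
  constructor
  · rintro ⟨m, rfl⟩
    obtain ⟨t, ht⟩ := hlog2
    refine ⟨⟨(m : ℚ), by push_cast; ring⟩, t, ht, (2 : ℚ) ^ m, ?_⟩
    rw [hEint m t, ht]
    push_cast
    ring
  · rintro ⟨⟨q, rfl⟩, t, ht, r, hr⟩
    -- n • (x * t) = m * t with m = q.num, n = q.den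
    have hden : ((q.den : ℚ) : F) * ((q : F) * t) = ((q.num : ℚ) : F) * t := by
      have : (q.den : ℚ) * q = (q.num : ℚ) := by
        rw [mul_comm, Rat.mul_den_eq_num]
      have h4 : ((q.den : ℚ) : F) * ((q : ℚ) : F) = ((q.num : ℚ) : F) := by
        rw [← Rat.cast_mul, this]
      rw [← h4]; ring
    have key : (r : F) ^ q.den = ((2 : F)) ^ q.num := by
      have h1 : E (((q.den : ℕ) : F) * ((q : F) * t)) = E ((q : F) * t) ^ q.den :=
        hEnat q.den _
      have h2 : E (((q.num : ℤ) : F) * t) = E t ^ q.num := hEint q.num t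
      rw [hr] at h1
      rw [ht] at h2
      have : ((q.den : ℚ) : F) = ((q.den : ℕ) : F) := by push_cast; ring
      rw [this] at hden
      have h3 : ((q.num : ℚ) : F) = ((q.num : ℤ) : F) := by push_cast; ring
      rw [hden, h3, h2] at h1
      exact h1.symm
    have keyQ : r ^ q.den = (2 : ℚ) ^ q.num := by
      have : ((r ^ q.den : ℚ) : F) = (((2 : ℚ) ^ q.num : ℚ) : F) := by
        push_cast
        exact key
      exact_mod_cast this
    have hn1 : q.den = 1 := aux_rat_pow_eq_two_zpow q.pos q.reduced keyQ
    refine ⟨q.num, ?_⟩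
    have : (q : ℚ) = (q.num : ℚ) := by
      conv_lhs => rw [← Rat.num_div_den q]
      rw [hn1]; simp
    have h5 := congrArg (fun a : ℚ => (a : F)) this
    simpa using h5
end

section
/- Let F be an exponential field satisfying the Schanuel condition. For X ⊆ F finite, define ecl(X) = {c ∈ F : etd(X ∪ {c}) = etd(X)}, where etd is the exponential transcendence degree. Then ecl is a closure operator on finite sets: X ⊆ ecl(X), and if X ⊆ Y then ecl(X) ⊆ ecl(Y), and moreover etd(X ∪ {c}) ∈ {etd(X), etd(X)+1} for every c ∈ F. -/
set_option maxHeartbeats 1000000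
set_option synthInstance.maxHeartbeats 400000
set_option linter.unusedSectionVars false
set_option linter.unusedVariables false



/-- The transcendence degree over ℚ of the field generated by `X ∪ E(X)`: the largest
size of an algebraically independent subset of `X ∪ E(X)`. -/
noncomputable def tdeg {F : Type*} [Field F] [CharZero F] [DecidableEq F] (E : F → F)
    (X : Finset F) : ℕ :=
  sSup {n : ℕ | ∃ s : Finset F, (s : Set F) ⊆ (X : Set F) ∪ E '' (X : Set F) ∧
    s.card = n ∧ AlgebraicIndependent ℚ (Subtype.val : ↥(↑s : Set F) → F)}

/-- The ℚ-linear dimension of the span of `X`. -/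
noncomputable def ldim {F : Type*} [Field F] [CharZero F] (X : Finset F) : ℕ :=
  Module.finrank ℚ (Submodule.span ℚ (X : Set F))

/-- The predimension function `δ(X) = trans.deg(X ∪ E(X)/ℚ) − lin.dim_ℚ(X)`. -/
noncomputable def pdelta {F : Type*} [Field F] [CharZero F] [DecidableEq F] (E : F → F)
    (X : Finset F) : ℤ :=
  (tdeg E X : ℤ) - (ldim X : ℤ)

/-- The Schanuel condition, stated as `δ(X) ≥ 0` for every finite `X`. -/
def SchanuelCondition {F : Type*} [Field F] [CharZero F] [DecidableEq F] (E : F → F) : Prop :=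
  ∀ X : Finset F, 0 ≤ pdelta E X

namespace EclProof


variable {F : Type*} [Field F] [CharZero F] [DecidableEq F]

set_option linter.unusedSectionVars false

/-- algebraic over ring adjoin if algebraic over field adjoin -/
lemma isAlgebraic_of_field {t : Set F} {x : F}
    (h : IsAlgebraic (IntermediateField.adjoin ℚ t) x) :
    IsAlgebraic (Algebra.adjoin ℚ t) x := by
  set A := Algebra.adjoin ℚ t with hA
  set K := FractionRing A with hK
  have hg : Function.Injective (A.val : A →ₐ[ℚ] F) := Subtype.val_injective
  set f : K →ₐ[ℚ] F := IsFractionRing.liftAlgHom hg with hf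
  letI : Algebra K F := f.toRingHom.toAlgebra
  have halgmap : ∀ a : A, algebraMap K F (algebraMap A K a) = algebraMap A F a := by
    intro a
    show f (algebraMap A K a) = _
    rw [IsFractionRing.liftAlgHom_apply, IsFractionRing.lift_algebraMap]
    rfl
  haveI : IsScalarTower A K F :=
    IsScalarTower.of_algebraMap_eq (fun a => (halgmap a).symm)
  have hrange : f.fieldRange = IntermediateField.adjoin ℚ t :=
    IsFractionRing.liftAlgHom_fieldRange_eq_of_range_eq hg A.range_val
  let e1 : K ≃ₐ[ℚ] f.fieldRange := AlgEquiv.ofInjectiveField f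
  let e2 : f.fieldRange ≃ₐ[ℚ] (IntermediateField.adjoin ℚ t) :=
    IntermediateField.equivOfEq hrange
  let e : ↥(IntermediateField.adjoin ℚ t) ≃ₐ[ℚ] K := (e1.trans e2).symm
  have hcomm : ∀ c : ↥(IntermediateField.adjoin ℚ t),
      algebraMap K F (e c) = algebraMap (IntermediateField.adjoin ℚ t) F c := by
    intro c
    show f (e c) = (c : F)
    have h1 : (e1.trans e2) (e c) = c := (e1.trans e2).apply_symm_apply c
    have h2 : ((e1.trans e2) (e c) : F) = (c : F) := by rw [h1]
    rw [← h2]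
    rfl
  have hxK : IsAlgebraic K x := by
    obtain ⟨p, hp, hpx⟩ := h
    refine ⟨p.map (e : ↥(IntermediateField.adjoin ℚ t) →+* K), ?_, ?_⟩
    · exact (Polynomial.map_ne_zero_iff
        (e : ↥(IntermediateField.adjoin ℚ t) →+* K).injective).2 hp
    · rw [Polynomial.aeval_def, Polynomial.eval₂_map]
      rw [Polynomial.aeval_def] at hpx
      rw [← hpx]
      congr 1
      ext c
      exact hcomm c
  exact (IsFractionRing.isAlgebraic_iff A K F).mpr hxK

/-- easy direction: ring adjoin to field adjoin -/
lemma isAlgebraic_to_field {t : Set F} {x : F}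
    (h : IsAlgebraic (Algebra.adjoin ℚ t) x) :
    IsAlgebraic (IntermediateField.adjoin ℚ t) x :=
  IsAlgebraic.tower_top_of_subalgebra_le (IntermediateField.algebra_adjoin_le_adjoin ℚ t) h

/-- monotonicity of algebraicity in the adjoined set -/
lemma isAlgebraic_mono {t t' : Set F} (h : t ⊆ t') {x : F}
    (hx : IsAlgebraic (Algebra.adjoin ℚ t) x) :
    IsAlgebraic (Algebra.adjoin ℚ t') x :=
  IsAlgebraic.tower_top_of_subalgebra_le (Algebra.adjoin_mono h) hx

/-- transitivity step -/
lemma trans_step {t : Set F} {b x : F}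
    (hb : IsAlgebraic (Algebra.adjoin ℚ t) b)
    (hx : IsAlgebraic (Algebra.adjoin ℚ (insert b t)) x) :
    IsAlgebraic (Algebra.adjoin ℚ t) x := by
  apply isAlgebraic_of_field
  set K := IntermediateField.adjoin ℚ t with hKdef
  have hbK : IsAlgebraic K b := isAlgebraic_to_field hb
  set L := IntermediateField.adjoin K {b} with hLdef
  haveI : Algebra.IsAlgebraic K L :=
    IntermediateField.isAlgebraic_adjoin (fun y hy => by
      rw [Set.mem_singleton_iff] at hy
      subst hy
      exact hbK.isIntegral)
  have hres : L.restrictScalars ℚ = IntermediateField.adjoin ℚ (t ∪ {b}) :=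
    IntermediateField.adjoin_adjoin_left ℚ t {b}
  have hxL : IsAlgebraic L x := by
    have h1 : IsAlgebraic (IntermediateField.adjoin ℚ (t ∪ {b})) x := by
      have h2 : insert b t = t ∪ {b} := by
        rw [Set.union_comm, Set.singleton_union]
      rw [← h2]
      exact isAlgebraic_to_field hx
    rw [← hres] at h1
    exact h1
  have hint : IsIntegral K x := by
    haveI : Algebra.IsIntegral K L := Algebra.isAlgebraic_iff_isIntegral.mp ‹_›
    exact isIntegral_trans x hxL.isIntegral
  exact hint.isAlgebraic

/-- element of the adjoined set is algebraic -/
lemma isAlgebraic_of_mem {t : Set F} {x : F} (h : x ∈ t) :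
    IsAlgebraic (Algebra.adjoin ℚ t) x := by
  have hx : x ∈ Algebra.adjoin ℚ t := Algebra.subset_adjoin h
  have : x = algebraMap (Algebra.adjoin ℚ t) F ⟨x, hx⟩ := rfl
  rw [this]
  exact isAlgebraic_algebraMap _

def Ind (s : Finset F) : Prop :=
  AlgebraicIndependent ℚ (Subtype.val : ↥(↑s : Set F) → F)

lemma Ind.mono' {s t : Finset F} (h : t ⊆ s) (hs : Ind s) : Ind t :=
  AlgebraicIndependent.mono (by exact_mod_cast h) hs

lemma ind_empty : Ind (∅ : Finset F) := by
  unfold Ind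
  rw [Finset.coe_empty]
  exact algebraicIndependent_empty

lemma indSet_insert_iff {s : Set F} {a : F} (ha : a ∉ s)
    (hs : AlgebraicIndependent ℚ (Subtype.val : s → F)) :
    AlgebraicIndependent ℚ (Subtype.val : ↥(insert a s) → F) ↔
      Transcendental (Algebra.adjoin ℚ s) a := by
  have key := hs.option_iff_transcendental a
  rw [Subtype.range_coe] at key
  rw [← key]
  have hfe : (Subtype.val : ↥(insert a s) → F) =
      (fun o : Option s => o.elim a Subtype.val) ∘ (Set.subtypeInsertEquivOption ha) := by
    funext x
    by_cases hxa : (x : F) = a <;> simp [Set.subtypeInsertEquivOption, hxa]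
  rw [hfe, algebraicIndependent_equiv]

lemma ind_insert_iff {s : Finset F} {a : F} (ha : a ∉ s) (hs : Ind s) :
    Ind (insert a s) ↔ Transcendental (Algebra.adjoin ℚ ((s : Set F))) a := by
  have ha' : a ∉ (s : Set F) := by exact_mod_cast ha
  unfold Ind
  rw [Finset.coe_insert]
  exact indSet_insert_iff ha' hs

/-- KEY LEMMA: an independent set is no larger than a set over which it is algebraic. -/
lemma card_le_of_algebraic :
    ∀ (k : ℕ) (s u : Finset F), (s \ u).card ≤ k → Ind s → Ind u →
      (∀ x ∈ s, IsAlgebraic (Algebra.adjoin ℚ (u : Set F)) x) → s.card ≤ u.card := by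
  intro k
  induction k with
  | zero =>
    intro s u hk _ _ _
    have : s \ u = ∅ := Finset.card_eq_zero.mp (Nat.le_zero.mp hk)
    exact Finset.card_le_card ((Finset.sdiff_eq_empty_iff_subset).mp this)
  | succ k ih =>
    intro s u hk hs hu halg
    classical
    by_cases hsu : s ⊆ u
    · exact Finset.card_le_card hsu
    obtain ⟨a, has, hau⟩ := Finset.not_subset.1 hsu
    set W₀ : Finset F := s.erase a with hW₀
    have hW₀s : W₀ ⊆ s := Finset.erase_subset _ _
    have hindW₀ : Ind W₀ := hs.mono' hW₀s
    have haW₀ : a ∉ W₀ := Finset.notMem_erase _ _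
    have hsins : insert a W₀ = s := Finset.insert_erase has
    have hatrans : Transcendental (Algebra.adjoin ℚ ((W₀ : Finset F) : Set F)) a := by
      have := (ind_insert_iff haW₀ hindW₀).1 (by rw [hsins]; exact hs)
      exact this
    -- minimal v ⊆ u with a algebraic over W₀ ∪ v
    set P : Finset (Finset F) :=
      u.powerset.filter (fun v => IsAlgebraic (Algebra.adjoin ℚ ((W₀ ∪ v : Finset F) : Set F)) a)
      with hP
    have huP : u ∈ P := by
      rw [hP, Finset.mem_filter, Finset.mem_powerset]
      exact ⟨le_refl u, isAlgebraic_mono (by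
        intro y hy
        simp only [Finset.coe_union, Set.mem_union]
        exact Or.inr hy) (halg a has)⟩
    obtain ⟨v, hvP, hvmin⟩ := Finset.exists_min_image P Finset.card ⟨u, huP⟩
    rw [hP, Finset.mem_filter, Finset.mem_powerset] at hvP
    obtain ⟨hvu, hva⟩ := hvP
    have hvne : v.Nonempty := by
      rcases Finset.eq_empty_or_nonempty v with h | h
      · exfalso
        rw [h, Finset.union_empty] at hva
        exact hatrans hva
      · exact h
    obtain ⟨b, hbv⟩ := hvne
    have hbu : b ∈ u := hvu hbv
    -- b ∉ s
    have hbs : b ∉ s := by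
      intro hbs
      have hba : b ≠ a := fun h => hau (h ▸ hbu)
      have hbW₀ : b ∈ W₀ := Finset.mem_erase.2 ⟨hba, hbs⟩
      have heq : W₀ ∪ v = W₀ ∪ v.erase b := by
        ext y
        simp only [Finset.mem_union, Finset.mem_erase]
        constructor
        · rintro (h | h)
          · exact Or.inl h
          · by_cases hyb : y = b
            · exact Or.inl (hyb ▸ hbW₀)
            · exact Or.inr ⟨hyb, h⟩
        · rintro (h | ⟨_, h⟩)
          · exact Or.inl h
          · exact Or.inr h
      have : v.erase b ∈ P := by
        rw [hP, Finset.mem_filter, Finset.mem_powerset]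
        exact ⟨(Finset.erase_subset _ _).trans hvu, by rw [← heq]; exact hva⟩
      have hlt : (v.erase b).card < v.card := Finset.card_erase_lt_of_mem hbv
      exact absurd (hvmin _ this) (by omega)
    set W : Finset F := W₀ ∪ v.erase b with hWdef
    have hWtrans : Transcendental (Algebra.adjoin ℚ ((W : Finset F) : Set F)) a := by
      by_contra hcon
      rw [Transcendental, not_not] at hcon
      have : v.erase b ∈ P := by
        rw [hP, Finset.mem_filter, Finset.mem_powerset]
        exact ⟨(Finset.erase_subset _ _).trans hvu, hcon⟩
      have hlt : (v.erase b).card < v.card := Finset.card_erase_lt_of_mem hbv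
      exact absurd (hvmin _ this) (by omega)
    have hWins : ((W₀ ∪ v : Finset F) : Set F) = insert b ((W : Finset F) : Set F) := by
      rw [hWdef]
      ext y
      simp only [Finset.coe_union, Set.mem_union, Set.mem_insert_iff, Finset.mem_coe,
        Finset.mem_erase]
      constructor
      · rintro (h | h)
        · exact Or.inr (Or.inl h)
        · by_cases hyb : y = b
          · exact Or.inl hyb
          · exact Or.inr (Or.inr ⟨hyb, h⟩)
      · rintro (h | h | ⟨_, h⟩)
        · exact Or.inr (h ▸ hbv)
        · exact Or.inl h
        · exact Or.inr h
    -- b is transcendental over W₀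
    have hbtrans : Transcendental (Algebra.adjoin ℚ ((W₀ : Finset F) : Set F)) b := by
      intro hbalg
      have hbW : IsAlgebraic (Algebra.adjoin ℚ ((W : Finset F) : Set F)) b :=
        isAlgebraic_mono (Finset.coe_subset.mpr
          (by rw [hWdef]; exact Finset.subset_union_left)) hbalg
      have haW : IsAlgebraic (Algebra.adjoin ℚ ((W : Finset F) : Set F)) a := by
        apply trans_step hbW
        rw [← hWins]
        exact hva
      exact hWtrans haW
    -- the new set s'
    have hbW₀ : b ∉ W₀ := fun h => hbs (hW₀s h)
    set s' : Finset F := insert b W₀ with hs'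
    have hinds' : Ind s' := (ind_insert_iff hbW₀ hindW₀).2 hbtrans
    have halgs' : ∀ x ∈ s', IsAlgebraic (Algebra.adjoin ℚ (u : Set F)) x := by
      intro x hx
      rw [hs', Finset.mem_insert] at hx
      rcases hx with rfl | hx
      · exact isAlgebraic_of_mem (by exact_mod_cast hbu)
      · exact halg x (hW₀s hx)
    have hcard' : s'.card = s.card := by
      rw [hs', Finset.card_insert_of_notMem hbW₀, hW₀, Finset.card_erase_of_mem has]
      have : 1 ≤ s.card := Finset.card_pos.2 ⟨a, has⟩
      omega
    have hsd : (s' \ u).card ≤ k := by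
      have h1 : s' \ u = (s \ u).erase a := by
        ext y
        simp only [hs', hW₀, Finset.mem_sdiff, Finset.mem_insert, Finset.mem_erase]
        constructor
        · rintro ⟨rfl | ⟨hya, hys⟩, hyu⟩
          · exact absurd hbu hyu
          · exact ⟨hya, hys, hyu⟩
        · rintro ⟨hya, hys, hyu⟩
          exact ⟨Or.inr ⟨hya, hys⟩, hyu⟩
      have h2 : a ∈ s \ u := Finset.mem_sdiff.2 ⟨has, hau⟩
      rw [h1, Finset.card_erase_of_mem h2]
      omega
    have := ih s' u hsd hinds' hu halgs'
    omega

/-- transitivity over a finite set -/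
lemma trans_finset : ∀ (w : Finset F) (t : Set F),
    (∀ b ∈ w, IsAlgebraic (Algebra.adjoin ℚ t) b) →
    ∀ x : F, IsAlgebraic (Algebra.adjoin ℚ ((w : Set F) ∪ t)) x →
    IsAlgebraic (Algebra.adjoin ℚ t) x := by
  intro w
  induction w using Finset.induction_on with
  | empty =>
    intro t _ x hx
    rw [Finset.coe_empty, Set.empty_union] at hx
    exact hx
  | @insert b w hbw ih =>
    intro t hb x hx
    have h1 : ((insert b w : Finset F) : Set F) ∪ t = insert b ((w : Set F) ∪ t) := by
      rw [Finset.coe_insert, Set.insert_union]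
    rw [h1] at hx
    have hbalg : IsAlgebraic (Algebra.adjoin ℚ ((w : Set F) ∪ t)) b :=
      isAlgebraic_mono Set.subset_union_right (hb b (Finset.mem_insert_self _ _))
    exact ih t (fun y hy => hb y (Finset.mem_insert_of_mem hy)) x (trans_step hbalg hx)

noncomputable def rnk (T : Finset F) : ℕ :=
  sSup {n : ℕ | ∃ s : Finset F, s ⊆ T ∧ s.card = n ∧ Ind s}

lemma rnk_set_nonempty (T : Finset F) :
    Set.Nonempty {n : ℕ | ∃ s : Finset F, s ⊆ T ∧ s.card = n ∧ Ind s} :=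
  ⟨0, ∅, Finset.empty_subset _, Finset.card_empty, ind_empty⟩

lemma rnk_set_bdd (T : Finset F) :
    BddAbove {n : ℕ | ∃ s : Finset F, s ⊆ T ∧ s.card = n ∧ Ind s} := by
  refine ⟨T.card, fun n hn => ?_⟩
  obtain ⟨s, hsT, hcard, _⟩ := hn
  rw [← hcard]
  exact Finset.card_le_card hsT

lemma le_rnk {T s : Finset F} (hsT : s ⊆ T) (hs : Ind s) : s.card ≤ rnk T :=
  le_csSup (rnk_set_bdd T) ⟨s, hsT, rfl, hs⟩

lemma rnk_le {T : Finset F} {m : ℕ} (h : ∀ s : Finset F, s ⊆ T → Ind s → s.card ≤ m) :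
    rnk T ≤ m := by
  apply csSup_le (rnk_set_nonempty T)
  rintro n ⟨s, hsT, rfl, hsi⟩
  exact h s hsT hsi

lemma rnk_mono {T T' : Finset F} (h : T ⊆ T') : rnk T ≤ rnk T' :=
  rnk_le (fun s hsT hsi => le_rnk (hsT.trans h) hsi)

lemma rnk_insert_le (a : F) (T : Finset F) : rnk (insert a T) ≤ rnk T + 1 := by
  apply rnk_le
  intro s hsT hsi
  have h1 : s.erase a ⊆ T := by
    intro y hy
    rw [Finset.mem_erase] at hy
    rcases Finset.mem_insert.1 (hsT hy.2) with h | h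
    · exact absurd h hy.1
    · exact h
  have h2 : (s.erase a).card ≤ rnk T := le_rnk h1 (hsi.mono' (Finset.erase_subset _ _))
  have h3 : s.card ≤ (s.erase a).card + 1 := by
    by_cases ha : a ∈ s
    · rw [Finset.card_erase_of_mem ha]; omega
    · rw [Finset.erase_eq_of_notMem ha]; omega
  omega

lemma rnk_le_of_algebraic {T u : Finset F} (hu : Ind u)
    (h : ∀ x ∈ T, IsAlgebraic (Algebra.adjoin ℚ (u : Set F)) x) : rnk T ≤ u.card := by
  apply rnk_le
  intro s hsT hsi
  exact card_le_of_algebraic (s \ u).card s u (le_refl _) hsi hu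
    (fun x hx => h x (hsT hx))

lemma exists_max_indep (T c : Finset F) (hcT : c ⊆ T) (hci : Ind c) :
    ∃ s : Finset F, c ⊆ s ∧ s ⊆ T ∧ Ind s ∧ s.card = rnk T ∧
      ∀ x ∈ T, IsAlgebraic (Algebra.adjoin ℚ (s : Set F)) x := by
  classical
  set Q : Finset (Finset F) := T.powerset.filter (fun s => c ⊆ s ∧ Ind s) with hQ
  have hcQ : c ∈ Q := by
    rw [hQ, Finset.mem_filter, Finset.mem_powerset]
    exact ⟨hcT, le_refl c, hci⟩
  obtain ⟨s, hsQ, hsmax⟩ := Finset.exists_max_image Q Finset.card ⟨c, hcQ⟩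
  rw [hQ, Finset.mem_filter, Finset.mem_powerset] at hsQ
  obtain ⟨hsT, hcs, hsi⟩ := hsQ
  have halg : ∀ x ∈ T, IsAlgebraic (Algebra.adjoin ℚ (s : Set F)) x := by
    intro x hxT
    by_contra hxt
    have hxs : x ∉ s := by
      intro hxs
      exact hxt (isAlgebraic_of_mem (by exact_mod_cast hxs))
    have hins : Ind (insert x s) := (ind_insert_iff hxs hsi).2 hxt
    have : insert x s ∈ Q := by
      rw [hQ, Finset.mem_filter, Finset.mem_powerset]
      exact ⟨Finset.insert_subset hxT hsT, hcs.trans (Finset.subset_insert _ _), hins⟩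
    have := hsmax _ this
    rw [Finset.card_insert_of_notMem hxs] at this
    omega
  refine ⟨s, hcs, hsT, hsi, le_antisymm (le_rnk hsT hsi) (rnk_le_of_algebraic hsi halg), halg⟩

lemma rnk_union_eq_of_algebraic {T T' : Finset F}
    (h : ∀ x ∈ T', IsAlgebraic (Algebra.adjoin ℚ (T : Set F)) x) :
    rnk (T ∪ T') = rnk T := by
  refine le_antisymm ?_ (rnk_mono Finset.subset_union_left)
  obtain ⟨s, -, hsT, hsi, hcard, halg⟩ :=
    exists_max_indep T ∅ (Finset.empty_subset _) ind_empty
  rw [← hcard]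
  apply rnk_le_of_algebraic hsi
  intro x hx
  rcases Finset.mem_union.1 hx with hx | hx
  · exact halg x hx
  · have h1 : IsAlgebraic (Algebra.adjoin ℚ ((T : Set F) ∪ (s : Set F))) x :=
      isAlgebraic_mono Set.subset_union_left (h x hx)
    exact trans_finset T (s : Set F) (fun b hb => halg b hb) x h1

lemma rnk_submodular (A B : Finset F) : rnk (A ∪ B) + rnk (A ∩ B) ≤ rnk A + rnk B := by
  classical
  obtain ⟨c, -, hcAB, hci, hccard, -⟩ :=
    exists_max_indep (A ∩ B) ∅ (Finset.empty_subset _) ind_empty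
  obtain ⟨i, hci', hiAB, hii, hicard, -⟩ :=
    exists_max_indep (A ∪ B) c (hcAB.trans (Finset.inter_subset_left.trans
      Finset.subset_union_left)) hci
  -- i ∩ A is independent in A
  have h1 : (i ∩ A).card ≤ rnk A :=
    le_rnk Finset.inter_subset_right (hii.mono' Finset.inter_subset_left)
  -- c ∪ (i \ A) is independent in B
  have hsub : c ∪ (i \ A) ⊆ i :=
    Finset.union_subset hci' (Finset.sdiff_subset.trans (le_refl i))
  have hindcb : Ind (c ∪ (i \ A)) := hii.mono' hsub
  have hcbB : c ∪ (i \ A) ⊆ B := by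
    intro y hy
    rcases Finset.mem_union.1 hy with hy | hy
    · exact Finset.inter_subset_right (hcAB hy)
    · rw [Finset.mem_sdiff] at hy
      rcases Finset.mem_union.1 (hiAB hy.1) with h | h
      · exact absurd h hy.2
      · exact h
  have h2 : (c ∪ (i \ A)).card ≤ rnk B := le_rnk hcbB hindcb
  have hdisj : Disjoint c (i \ A) := by
    rw [Finset.disjoint_right]
    intro y hy
    rw [Finset.mem_sdiff] at hy
    intro hyc
    exact hy.2 (Finset.inter_subset_left (hcAB hyc))
  have h3 : (c ∪ (i \ A)).card = c.card + (i \ A).card := Finset.card_union_of_disjoint hdisj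
  have h4 : (i ∩ A).card + (i \ A).card = i.card := Finset.card_inter_add_card_sdiff i A
  omega

section Exp

variable {E : F → F}

lemma E_ne_zero (hE0 : E 0 = 1) (hEadd : ∀ x y : F, E (x + y) = E x * E y) (x : F) :
    E x ≠ 0 := by
  intro h
  have h1 : E x * E (-x) = 1 := by rw [← hEadd, add_neg_cancel, hE0]
  rw [h, zero_mul] at h1
  exact zero_ne_one h1

lemma E_neg (hE0 : E 0 = 1) (hEadd : ∀ x y : F, E (x + y) = E x * E y) (x : F) :
    E (-x) = (E x)⁻¹ := by
  have h1 : E x * E (-x) = 1 := by rw [← hEadd, add_neg_cancel, hE0]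
  field_simp [E_ne_zero hE0 hEadd x] at h1 ⊢
  linear_combination h1

lemma E_nsmul (hE0 : E 0 = 1) (hEadd : ∀ x y : F, E (x + y) = E x * E y) (n : ℕ) (x : F) :
    E ((n : F) * x) = E x ^ n := by
  induction n with
  | zero => simpa using hE0
  | succ n ih =>
    have : ((n : F) + 1) * x = (n : F) * x + x := by ring
    push_cast
    rw [this, hEadd, ih, pow_succ]

lemma E_zsmul (hE0 : E 0 = 1) (hEadd : ∀ x y : F, E (x + y) = E x * E y) (m : ℤ) (x : F) :
    E ((m : F) * x) = E x ^ m := by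
  obtain ⟨n, rfl | rfl⟩ := m.eq_nat_or_neg
  · push_cast
    rw [E_nsmul hE0 hEadd, zpow_natCast]
  · push_cast
    rw [neg_mul, E_neg hE0 hEadd, E_nsmul hE0 hEadd, zpow_neg, zpow_natCast]

/-- members of an intermediate field are algebraic over it -/
lemma isAlgebraic_of_mem_field {K : IntermediateField ℚ F} {x : F} (h : x ∈ K) :
    IsAlgebraic K x := by
  have : x = algebraMap K F ⟨x, h⟩ := rfl
  rw [this]
  exact isAlgebraic_algebraMap _

lemma isAlgebraic_mul_field {K : IntermediateField ℚ F} {x y : F}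
    (hx : IsAlgebraic K x) (hy : IsAlgebraic K y) : IsAlgebraic K (x * y) := by
  rw [isAlgebraic_iff_isIntegral] at hx hy ⊢
  exact (integralClosure K F).mul_mem hx hy

lemma isAlgebraic_pow_field {K : IntermediateField ℚ F} {x : F} (n : ℕ)
    (hx : IsAlgebraic K x) : IsAlgebraic K (x ^ n) := by
  rw [isAlgebraic_iff_isIntegral] at hx ⊢
  exact (integralClosure K F).pow_mem hx n

lemma isAlgebraic_zpow_field {K : IntermediateField ℚ F} {x : F} (m : ℤ)
    (hx : IsAlgebraic K x) : IsAlgebraic K (x ^ m) := by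
  obtain ⟨n, rfl | rfl⟩ := m.eq_nat_or_neg
  · rw [zpow_natCast]
    exact isAlgebraic_pow_field n hx
  · rw [zpow_neg, zpow_natCast]
    exact (isAlgebraic_pow_field n hx).inv

/-- The key exponential-homomorphism fact: if `w` is in the ℚ-span of `X`, then
`E w` is algebraic over the ring generated by `E '' X`. -/
lemma E_span_isAlgebraic (hE0 : E 0 = 1) (hEadd : ∀ x y : F, E (x + y) = E x * E y)
    {X : Finset F} {w : F} (hw : w ∈ Submodule.span ℚ (X : Set F)) :
    IsAlgebraic (Algebra.adjoin ℚ (E '' (X : Set F))) (E w) := by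
  apply isAlgebraic_of_field
  set K := IntermediateField.adjoin ℚ (E '' (X : Set F)) with hK
  refine Submodule.span_induction ?_ ?_ ?_ ?_ hw
  · intro x hx
    exact isAlgebraic_of_mem_field (IntermediateField.subset_adjoin ℚ _ ⟨x, hx, rfl⟩)
  · rw [hE0]
    exact isAlgebraic_of_mem_field (one_mem K)
  · intro y z _ _ hy hz
    rw [hEadd]
    exact isAlgebraic_mul_field hy hz
  · intro q y _ hy
    -- E (q • y) ^ q.den = E y ^ q.num
    have hden : (0:ℕ) < q.den := q.pos
    have hkey : E (q • y) ^ q.den = E y ^ q.num := by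
      have h1 : E (q • y) ^ q.den = E ((q.den : F) * (q • y)) :=
        (E_nsmul hE0 hEadd q.den _).symm
      have h2 : (q.den : F) * (q • y) = (q.num : F) * y := by
        rw [Rat.smul_def]
        push_cast
        rw [← mul_assoc]
        congr 1
        have : ((q.den : ℚ) * q) = (q.num : ℚ) := by
          rw [mul_comm]
          exact_mod_cast Rat.mul_den_eq_num q
        calc (q.den : F) * (q : F) = (((q.den : ℚ) * q : ℚ) : F) := by push_cast; ring
          _ = ((q.num : ℚ) : F) := by rw [this]
          _ = (q.num : F) := by push_cast; ring
      rw [h1, h2, E_zsmul hE0 hEadd]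
    have halg : IsAlgebraic K (E (q • y) ^ q.den) := by
      rw [hkey]
      exact isAlgebraic_zpow_field q.num hy
    exact halg.of_pow hden

end Exp

section Tdeg

variable (E : F → F)

/-- the generating finset -/
noncomputable def GG (X : Finset F) : Finset F := X ∪ X.image E

lemma coe_GG (X : Finset F) : ((GG E X : Finset F) : Set F) = (X : Set F) ∪ E '' (X : Set F) := by
  rw [GG, Finset.coe_union, Finset.coe_image]

lemma tdeg_eq_rnk (X : Finset F) : tdeg E X = rnk (GG E X) := by
  unfold tdeg rnk
  congr 1
  ext n
  constructor
  · rintro ⟨s, hsub, hcard, hind⟩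
    exact ⟨s, by rw [← Finset.coe_subset, coe_GG]; exact hsub, hcard, hind⟩
  · rintro ⟨s, hsub, hcard, hind⟩
    exact ⟨s, by rw [← coe_GG E]; exact_mod_cast hsub, hcard, hind⟩

lemma GG_mono {X Y : Finset F} (h : X ⊆ Y) : GG E X ⊆ GG E Y :=
  Finset.union_subset_union h (Finset.image_subset_image h)

lemma tdeg_mono {X Y : Finset F} (h : X ⊆ Y) : tdeg E X ≤ tdeg E Y := by
  rw [tdeg_eq_rnk, tdeg_eq_rnk]
  exact rnk_mono (GG_mono E h)

lemma isAlgebraic_of_mem_adjoin {t : Set F} {x : F} (h : x ∈ Algebra.adjoin ℚ t) :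
    IsAlgebraic (Algebra.adjoin ℚ t) x := by
  have : x = algebraMap (Algebra.adjoin ℚ t) F ⟨x, h⟩ := rfl
  rw [this]
  exact isAlgebraic_algebraMap _

/-- adding elements of the span does not change tdeg -/
lemma tdeg_union_span (hE0 : E 0 = 1) (hEadd : ∀ x y : F, E (x + y) = E x * E y)
    {X W : Finset F} (hW : ∀ w ∈ W, w ∈ Submodule.span ℚ (X : Set F)) :
    tdeg E (X ∪ W) = tdeg E X := by
  rw [tdeg_eq_rnk, tdeg_eq_rnk]
  have hGG : GG E (X ∪ W) = GG E X ∪ (W ∪ W.image E) := by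
    unfold GG
    rw [Finset.image_union]
    ext y
    simp only [Finset.mem_union]
    tauto
  rw [hGG]
  apply rnk_union_eq_of_algebraic
  intro x hx
  rcases Finset.mem_union.1 hx with hx | hx
  · -- x ∈ W : in the span, hence in the adjoin
    apply isAlgebraic_of_mem_adjoin
    have h1 : x ∈ Algebra.adjoin ℚ (X : Set F) := by
      have := Algebra.span_le_adjoin ℚ (X : Set F)
      exact this (hW x hx)
    exact Algebra.adjoin_mono (by rw [coe_GG]; exact Set.subset_union_left) h1
  · -- x = E w for w ∈ W
    obtain ⟨w, hwW, rfl⟩ := Finset.mem_image.1 hx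
    have h1 : IsAlgebraic (Algebra.adjoin ℚ (E '' (X : Set F))) (E w) :=
      E_span_isAlgebraic hE0 hEadd (hW w hwW)
    exact isAlgebraic_mono (by rw [coe_GG]; exact Set.subset_union_right) h1

lemma tdeg_submodular (X Y : Finset F) :
    tdeg E (X ∪ Y) + tdeg E (X ∩ Y) ≤ tdeg E X + tdeg E Y := by
  simp only [tdeg_eq_rnk]
  have h1 : GG E (X ∪ Y) = GG E X ∪ GG E Y := by
    unfold GG
    rw [Finset.image_union]
    ext y
    simp only [Finset.mem_union]
    tauto
  have h2 : GG E (X ∩ Y) ⊆ GG E X ∩ GG E Y :=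
    Finset.subset_inter (GG_mono E Finset.inter_subset_left)
      (GG_mono E Finset.inter_subset_right)
  calc rnk (GG E (X ∪ Y)) + rnk (GG E (X ∩ Y))
      ≤ rnk (GG E X ∪ GG E Y) + rnk (GG E X ∩ GG E Y) := by
        rw [h1]
        exact Nat.add_le_add_left (rnk_mono h2) _
    _ ≤ rnk (GG E X) + rnk (GG E Y) := rnk_submodular _ _

lemma tdeg_insert_le (X : Finset F) (c : F) :
    tdeg E (insert c X) ≤ tdeg E X + 2 := by
  rw [tdeg_eq_rnk, tdeg_eq_rnk]
  have h1 : GG E (insert c X) = insert c (insert (E c) (GG E X)) := by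
    unfold GG
    ext y
    simp only [Finset.mem_union, Finset.mem_insert, Finset.mem_image]
    constructor
    · rintro (h | ⟨w, hw, rfl⟩)
      · rcases h with h | h
        · exact Or.inl h
        · exact Or.inr (Or.inr (Or.inl h))
      · rcases hw with rfl | hw
        · exact Or.inr (Or.inl rfl)
        · exact Or.inr (Or.inr (Or.inr ⟨w, hw, rfl⟩))
    · rintro (h | h | h | ⟨w, hw, rfl⟩)
      · exact Or.inl (Or.inl h)
      · exact Or.inr ⟨c, Or.inl rfl, h.symm⟩
      · exact Or.inl (Or.inr h)
      · exact Or.inr ⟨w, Or.inr hw, rfl⟩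
  rw [h1]
  calc rnk (insert c (insert (E c) (GG E X))) ≤ rnk (insert (E c) (GG E X)) + 1 :=
      rnk_insert_le _ _
    _ ≤ rnk (GG E X) + 1 + 1 := Nat.add_le_add_right (rnk_insert_le _ _) _
    _ = rnk (GG E X) + 2 := by omega

end Tdeg

section Ldim

lemma ldim_fd (X : Finset F) : FiniteDimensional ℚ (Submodule.span ℚ (X : Set F)) :=
  FiniteDimensional.span_of_finite ℚ X.finite_toSet

lemma ldim_mono {X Y : Finset F} (h : X ⊆ Y) : ldim X ≤ ldim Y := by
  haveI := ldim_fd (F := F) Y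
  exact Submodule.finrank_mono (Submodule.span_mono (by exact_mod_cast h))

lemma ldim_insert_mem {X : Finset F} {c : F} (hc : c ∈ Submodule.span ℚ (X : Set F)) :
    ldim (insert c X) = ldim X := by
  unfold ldim
  rw [Finset.coe_insert, Submodule.span_insert_eq_span hc]

lemma ldim_insert_notmem {X : Finset F} {c : F} (hc : c ∉ Submodule.span ℚ (X : Set F)) :
    ldim (insert c X) = ldim X + 1 := by
  unfold ldim
  haveI := ldim_fd (F := F) X
  rw [Finset.coe_insert, Submodule.span_insert]
  have hc0 : c ≠ 0 := fun h => hc (h ▸ Submodule.zero_mem _)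
  have hfin1 : FiniteDimensional ℚ (Submodule.span ℚ {c} : Submodule ℚ F) :=
    FiniteDimensional.span_of_finite ℚ (Set.finite_singleton c)
  have hinf : (Submodule.span ℚ {c} ⊓ Submodule.span ℚ (X : Set F)) = ⊥ := by
    rw [eq_bot_iff]
    rintro y ⟨hy1, hy2⟩
    obtain ⟨a, rfl⟩ := Submodule.mem_span_singleton.1 hy1
    rcases eq_or_ne a 0 with rfl | ha
    · simp
    · exfalso
      apply hc
      have := Submodule.smul_mem (Submodule.span ℚ (X : Set F)) a⁻¹ hy2
      rwa [inv_smul_smul₀ ha] at this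
  have := Submodule.finrank_sup_add_finrank_inf_eq
    (Submodule.span ℚ {c}) (Submodule.span ℚ (X : Set F))
  rw [hinf] at this
  rw [finrank_span_singleton hc0] at this
  simp only [finrank_bot] at this
  omega

lemma ldim_modular (X Y : Finset F) :
    ldim (X ∪ Y) + Module.finrank ℚ
      ((Submodule.span ℚ (X : Set F)) ⊓ (Submodule.span ℚ (Y : Set F)) : Submodule ℚ F)
      = ldim X + ldim Y := by
  unfold ldim
  haveI := ldim_fd (F := F) X
  haveI := ldim_fd (F := F) Y
  rw [Finset.coe_union, Submodule.span_union]
  exact Submodule.finrank_sup_add_finrank_inf_eq _ _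

end Ldim

section Main

variable (E : F → F) (hE0 : E 0 = 1) (hEadd : ∀ x y : F, E (x + y) = E x * E y)

include hE0 hEadd in
lemma pdelta_insert_le (X : Finset F) (c : F) :
    pdelta E (insert c X) ≤ pdelta E X + 1 := by
  by_cases hc : c ∈ Submodule.span ℚ (X : Set F)
  · have h1 : tdeg E (insert c X) = tdeg E X := by
      have : insert c X = X ∪ {c} := by rw [Finset.union_comm]; rfl
      rw [this]
      apply tdeg_union_span E hE0 hEadd
      intro w hw
      rw [Finset.mem_singleton] at hw
      exact hw ▸ hc
    have h2 : ldim (insert c X) = ldim X := ldim_insert_mem hc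
    unfold pdelta
    rw [h1, h2]
    omega
  · have h1 : tdeg E (insert c X) ≤ tdeg E X + 2 := tdeg_insert_le E X c
    have h2 : ldim (insert c X) = ldim X + 1 := ldim_insert_notmem hc
    unfold pdelta
    rw [h2]
    push_cast
    omega

variable (etd : Finset F → ℤ)
  (hattained : ∀ X : Finset F, ∃ X₁ : Finset F, X ⊆ X₁ ∧ etd X = pdelta E X₁)
  (hmin : ∀ X X₁ : Finset F, X ⊆ X₁ → etd X ≤ pdelta E X₁)

include hattained hmin in
lemma etd_mono {X Y : Finset F} (h : X ⊆ Y) : etd X ≤ etd Y := by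
  obtain ⟨Y₁, hY₁, hYeq⟩ := hattained Y
  rw [hYeq]
  exact hmin X Y₁ (h.trans hY₁)

include hE0 hEadd hattained hmin in
lemma etd_insert_le (X : Finset F) (c : F) : etd (insert c X) ≤ etd X + 1 := by
  obtain ⟨X₁, hX₁, hXeq⟩ := hattained X
  calc etd (insert c X) ≤ pdelta E (insert c X₁) :=
        hmin _ _ (Finset.insert_subset_insert c hX₁)
    _ ≤ pdelta E X₁ + 1 := pdelta_insert_le E hE0 hEadd X₁ c
    _ = etd X + 1 := by rw [← hXeq]

include hE0 hEadd hattained hmin in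
lemma ecl_mono {X Y : Finset F} (hXY : X ⊆ Y) {c : F}
    (hcX : etd (insert c X) = etd X) : etd (insert c Y) = etd Y := by
  refine le_antisymm ?_ (etd_mono E etd hattained hmin (Finset.subset_insert c Y))
  -- choose witnesses
  obtain ⟨X₁, hX₁, hX₁eq⟩ := hattained (insert c X)
  obtain ⟨Y₁, hY₁, hY₁eq⟩ := hattained Y
  haveI := ldim_fd (F := F) X₁
  haveI := ldim_fd (F := F) Y₁
  set V : Submodule ℚ F :=
    Submodule.span ℚ ((X₁ : Finset F) : Set F) ⊓ Submodule.span ℚ ((Y₁ : Finset F) : Set F)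
    with hV
  haveI : FiniteDimensional ℚ V := Submodule.finiteDimensional_of_le inf_le_left
  obtain ⟨W, hWspan⟩ := (Submodule.fg_iff_finiteDimensional V).2 ‹_›
  have hWX : ∀ w ∈ W, w ∈ Submodule.span ℚ ((X₁ : Finset F) : Set F) := by
    intro w hw
    have : w ∈ Submodule.span ℚ ((W : Finset F) : Set F) :=
      Submodule.subset_span (by exact_mod_cast hw)
    rw [hWspan] at this
    exact (inf_le_left : V ≤ _) this
  have hWY : ∀ w ∈ W, w ∈ Submodule.span ℚ ((Y₁ : Finset F) : Set F) := by
    intro w hw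
    have : w ∈ Submodule.span ℚ ((W : Finset F) : Set F) :=
      Submodule.subset_span (by exact_mod_cast hw)
    rw [hWspan] at this
    exact (inf_le_right : V ≤ _) this
  set X₂ := X₁ ∪ W with hX₂
  set Y₂ := Y₁ ∪ W with hY₂
  -- spans unchanged
  have hspanX : Submodule.span ℚ ((X₂ : Finset F) : Set F)
      = Submodule.span ℚ ((X₁ : Finset F) : Set F) := by
    rw [hX₂, Finset.coe_union, Submodule.span_union, hWspan]
    exact sup_eq_left.2 inf_le_left
  have hspanY : Submodule.span ℚ ((Y₂ : Finset F) : Set F)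
      = Submodule.span ℚ ((Y₁ : Finset F) : Set F) := by
    rw [hY₂, Finset.coe_union, Submodule.span_union, hWspan]
    exact sup_eq_left.2 inf_le_right
  have hpdX : pdelta E X₂ = pdelta E X₁ := by
    unfold pdelta ldim
    rw [hspanX, tdeg_union_span E hE0 hEadd hWX]
  have hpdY : pdelta E Y₂ = pdelta E Y₁ := by
    unfold pdelta ldim
    rw [hspanY, tdeg_union_span E hE0 hEadd hWY]
  -- the intersection is linearly tight
  have hspanI : Submodule.span ℚ ((X₂ ∩ Y₂ : Finset F) : Set F) = V := by
    apply le_antisymm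
    · rw [hV, ← hspanX, ← hspanY]
      apply le_inf
      · exact Submodule.span_mono (by exact_mod_cast Finset.inter_subset_left)
      · exact Submodule.span_mono (by exact_mod_cast Finset.inter_subset_right)
    · rw [← hWspan]
      apply Submodule.span_mono
      have : W ⊆ X₂ ∩ Y₂ :=
        Finset.subset_inter Finset.subset_union_right Finset.subset_union_right
      exact_mod_cast this
  -- modular law for linear dimension
  have hmod : ldim (X₂ ∪ Y₂) + ldim (X₂ ∩ Y₂) = ldim X₂ + ldim Y₂ := by
    have h1 := ldim_modular (F := F) X₂ Y₂
    have h2 : (Submodule.span ℚ ((X₂ : Finset F) : Set F)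
        ⊓ Submodule.span ℚ ((Y₂ : Finset F) : Set F) : Submodule ℚ F) = V := by
      rw [hspanX, hspanY, hV]
    rw [h2] at h1
    rw [← h1]
    congr 1
    unfold ldim
    rw [hspanI]
  have hsub := tdeg_submodular E X₂ Y₂
  -- predimension submodularity
  have hpdsub : pdelta E (X₂ ∪ Y₂) + pdelta E (X₂ ∩ Y₂) ≤ pdelta E X₂ + pdelta E Y₂ := by
    unfold pdelta
    push_cast
    have hmod' : (ldim (X₂ ∪ Y₂) : ℤ) + (ldim (X₂ ∩ Y₂) : ℤ)
        = (ldim X₂ : ℤ) + (ldim Y₂ : ℤ) := by exact_mod_cast hmod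
    have hsub' : (tdeg E (X₂ ∪ Y₂) : ℤ) + (tdeg E (X₂ ∩ Y₂) : ℤ)
        ≤ (tdeg E X₂ : ℤ) + (tdeg E Y₂ : ℤ) := by exact_mod_cast hsub
    omega
  -- lower bound for the intersection
  have hXsubI : X ⊆ X₂ ∩ Y₂ := by
    apply Finset.subset_inter
    · exact ((Finset.subset_insert c X).trans hX₁).trans Finset.subset_union_left
    · exact (hXY.trans hY₁).trans Finset.subset_union_left
  have hlow : etd X ≤ pdelta E (X₂ ∩ Y₂) := hmin X _ hXsubI
  -- insert c Y is inside the union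
  have hcY : insert c Y ⊆ X₂ ∪ Y₂ := by
    apply Finset.insert_subset
    · exact Finset.mem_union_left _ (Finset.mem_union_left _ (hX₁ (Finset.mem_insert_self c X)))
    · exact fun y hy => Finset.mem_union_right _ (Finset.mem_union_left _ (hY₁ hy))
  have hup : etd (insert c Y) ≤ pdelta E (X₂ ∪ Y₂) := hmin _ _ hcY
  have hXval : pdelta E X₂ = etd X := by rw [hpdX, ← hX₁eq, hcX]
  have hYval : pdelta E Y₂ = etd Y := by rw [hpdY, ← hY₁eq]
  omega

end Main

end EclProof



/-- let `etd` be the exponential transcendence degree (the attained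
minimum of δ over finite supersets) and `ecl X = {c : etd (X ∪ {c}) = etd X}`. Then
`ecl` is a closure operator on finite sets: `X ⊆ ecl X`; `X ⊆ Y → ecl X ⊆ ecl Y`;
and moreover `etd (X ∪ {c}) ∈ {etd X, etd X + 1}` for every `c`. -/
theorem ecl_closure_operator
    (F : Type*) [Field F] [CharZero F] [DecidableEq F] (E : F → F)
    (hE0 : E 0 = 1) (hEadd : ∀ x y : F, E (x + y) = E x * E y)
    (hSC : SchanuelCondition E)
    (etd : Finset F → ℤ)
    (hattained : ∀ X : Finset F, ∃ X₁ : Finset F, X ⊆ X₁ ∧ etd X = pdelta E X₁)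
    (hmin : ∀ X X₁ : Finset F, X ⊆ X₁ → etd X ≤ pdelta E X₁) :
    (∀ X : Finset F, ∀ x ∈ X, x ∈ {c : F | etd (insert c X) = etd X}) ∧
    (∀ X Y : Finset F, X ⊆ Y →
      {c : F | etd (insert c X) = etd X} ⊆ {c : F | etd (insert c Y) = etd Y}) ∧
    (∀ (X : Finset F) (c : F),
      etd (insert c X) = etd X ∨ etd (insert c X) = etd X + 1) := by
  refine ⟨?_, ?_, ?_⟩
  · intro X x hx
    simp only [Set.mem_setOf_eq, Finset.insert_eq_self.mpr hx]
  · intro X Y hXY c hc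
    simp only [Set.mem_setOf_eq] at hc ⊢
    exact EclProof.ecl_mono E hE0 hEadd etd hattained hmin hXY hc
  · intro X c
    have h1 : etd X ≤ etd (insert c X) :=
      EclProof.etd_mono E etd hattained hmin (Finset.subset_insert c X)
    have h2 : etd (insert c X) ≤ etd X + 1 :=
      EclProof.etd_insert_le E hE0 hEadd etd hattained hmin X c
    omega
end
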